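/- arXiv:1503.06595 — 5 statements merged into one kernel-verified Lean document; each statement's English description precedes it below -/
import Mathlib

section
/- For any simple graph G on n vertices with Laplacian matrix L and any integer k with 2 ≤ k ≤ n, the size of any k-cut of G (i.e., the number of edges joining different parts in any partition of the vertex set into k parts) is at most (n(k-1)/(2k))·λ_max(L), where λ_max(L) is the largest eigenvalue of L. -/
open Matrix Finset

def cutSize {n k : ℕ} (G : SimpleGraph (Fin n)) [DecidableRel G.Adj] (f : Fin n → Fin k) : ℕ :=
  (G.edgeFinset.filter (fun e => ¬ (Sym2.map f e).IsDiag)).card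

def hasEigenvalue {n : ℕ} (M : Matrix (Fin n) (Fin n) ℝ) (μ : ℝ) : Prop :=
  ∃ v : Fin n → ℝ, v ≠ 0 ∧ M.mulVec v = μ • v

def isLargestEigenvalue {n : ℕ} (M : Matrix (Fin n) (Fin n) ℝ) (lam : ℝ) : Prop :=
  hasEigenvalue M lam ∧ ∀ μ : ℝ, hasEigenvalue M μ → μ ≤ lam

lemma quad_le_aux {n : ℕ} (M : Matrix (Fin n) (Fin n) ℝ) (hM : M.IsHermitian) (lam : ℝ)
    (hlam : ∀ μ, hasEigenvalue M μ → μ ≤ lam) (x : Fin n → ℝ) :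
    x ⬝ᵥ M.mulVec x ≤ lam * (x ⬝ᵥ x) := by
  have hev : ∀ i, hM.eigenvalues i ≤ lam := by
    intro i
    refine hlam _ ⟨hM.eigenvectorBasis i, ?_, hM.mulVec_eigenvectorBasis i⟩
    have h1 := hM.eigenvectorBasis.orthonormal.ne_zero i
    intro h
    exact h1 (PiLp.ext fun j => congrFun h j)
  set U : Matrix (Fin n) (Fin n) ℝ := (hM.eigenvectorUnitary : Matrix (Fin n) (Fin n) ℝ) with hU
  have hsU : star U = Uᵀ := by
    rw [Matrix.star_eq_conjTranspose, conjTranspose_eq_transpose_of_trivial]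
  set y : Fin n → ℝ := Uᵀ *ᵥ x with hy
  have hUU : U * Uᵀ = 1 := by
    rw [← hsU]; exact (Matrix.mem_unitaryGroup_iff).mp hM.eigenvectorUnitary.2
  have key : ∀ (D : Matrix (Fin n) (Fin n) ℝ), x ⬝ᵥ (U * D * Uᵀ) *ᵥ x = y ⬝ᵥ D *ᵥ y := by
    intro D
    rw [hy, ← mulVec_mulVec, ← mulVec_mulVec, dotProduct_mulVec x U, ← mulVec_transpose]
  have hspec := hM.spectral_theorem
  rw [Unitary.conjStarAlgAut_apply] at hspec
  rw [← hU, hsU] at hspec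
  simp only [RCLike.ofReal_real_eq_id, Function.id_comp] at hspec
  have h1 : x ⬝ᵥ M.mulVec x = y ⬝ᵥ (diagonal hM.eigenvalues) *ᵥ y := by
    conv_lhs => rw [hspec]
    exact key _
  have h2 : x ⬝ᵥ x = y ⬝ᵥ y := by
    have := key 1
    rwa [mul_one, hUU, one_mulVec, one_mulVec] at this
  rw [h1, h2]
  simp only [dotProduct, mulVec_diagonal]
  rw [Finset.mul_sum]
  apply Finset.sum_le_sum
  intro i _
  have := hev i
  nlinarith [sq_nonneg (y i)]

lemma Qform {n : ℕ} (G : SimpleGraph (Fin n)) [DecidableRel G.Adj] (v : Fin n → ℝ) :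
    v ⬝ᵥ (G.lapMatrix ℝ) *ᵥ v = (∑ i, ∑ j, if G.Adj i j then (v i - v j)^2 else 0) / 2 := by
  rw [← Matrix.toLinearMap₂'_apply', SimpleGraph.lapMatrix_toLinearMap₂']

lemma pairs_card {n k : ℕ} (G : SimpleGraph (Fin n)) [DecidableRel G.Adj] (f : Fin n → Fin k) :
    ((univ : Finset (Fin n × Fin n)).filter fun p => G.Adj p.1 p.2 ∧ f p.1 ≠ f p.2).card
      = 2 * cutSize G f := by
  set H : SimpleGraph (Fin n) := SimpleGraph.fromRel (fun i j => G.Adj i j ∧ f i ≠ f j) with hH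
  have hHadj : ∀ i j, H.Adj i j ↔ G.Adj i j ∧ f i ≠ f j := by
    intro i j
    rw [hH, SimpleGraph.fromRel_adj]
    constructor
    · rintro ⟨hne, h | h⟩
      · exact h
      · exact ⟨h.1.symm, fun hc => h.2 hc.symm⟩
    · intro h
      exact ⟨G.ne_of_adj h.1, Or.inl h⟩
  haveI : DecidableRel H.Adj := fun a b => decidable_of_iff _ (hHadj a b).symm
  have hedge : H.edgeFinset = G.edgeFinset.filter (fun e => ¬ (Sym2.map f e).IsDiag) := by
    ext e
    refine Sym2.ind (fun a b => ?_) e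
    simp [SimpleGraph.mem_edgeFinset, hHadj, Sym2.map_pair_eq, Sym2.mk_isDiag_iff]
  have hcut : cutSize G f = H.edgeFinset.card := by rw [cutSize, ← hedge]
  rw [hcut, SimpleGraph.two_mul_card_edgeFinset]
  congr 1
  apply Finset.filter_congr
  rintro ⟨a, b⟩ _
  simp [hHadj]

theorem stmt_0 {n k : ℕ} (hk2 : 2 ≤ k) (hkn : k ≤ n)
    (G : SimpleGraph (Fin n)) [DecidableRel G.Adj]
    (lam : ℝ) (hlam : isLargestEigenvalue (G.lapMatrix ℝ) lam)
    (f : Fin n → Fin k) :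
    (cutSize G f : ℝ) ≤ (n : ℝ) * ((k : ℝ) - 1) / (2 * k) * lam := by
  have hn : 0 < n := lt_of_lt_of_le (by norm_num) (hk2.trans hkn)
  have hnR : (0:ℝ) < n := by exact_mod_cast hn
  have hkR : (0:ℝ) < k := by positivity
  -- lam is nonnegative
  have hlam0 : 0 ≤ lam := by
    refine hlam.2 0 ⟨fun _ => 1, ?_, ?_⟩
    · intro h
      have := congrFun h ⟨0, hn⟩
      norm_num at this
    · rw [SimpleGraph.lapMatrix_mulVec_const_eq_zero, zero_smul]
  set x : Fin k → Fin n → ℝ := fun c i => if f i = c then 1 else 0 with hx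
  set N : Fin k → ℕ := fun c => (univ.filter fun i => f i = c).card with hN
  set m : Fin k → ℝ := fun c => (N c : ℝ) / n with hm
  set y : Fin k → Fin n → ℝ := fun c i => x c i - m c with hy
  -- Step A
  have hinner : ∀ i j : Fin n, ∑ c, (x c i - x c j)^2 = if f i = f j then 0 else 2 := by
    intro i j
    by_cases h : f i = f j
    · simp [hx, h]
    · rw [if_neg h]
      have hterm : ∀ c, (x c i - x c j)^2
          = (if f i = c then (1:ℝ) else 0) + (if f j = c then 1 else 0) := by
        intro c
        by_cases h1 : f i = c <;> by_cases h2 : f j = c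
        · exact absurd (h1.trans h2.symm) h
        all_goals simp [hx, h1, h2]
      simp [hterm, Finset.sum_add_distrib]
      norm_num
  have hpair : ∀ i j : Fin n, ∑ c, (if G.Adj i j then (x c i - x c j)^2 else 0)
      = if G.Adj i j ∧ f i ≠ f j then 2 else 0 := by
    intro i j
    by_cases hadj : G.Adj i j
    · by_cases heq : f i = f j <;> simp [hadj, heq, hinner i j]
    · simp [hadj]
  have hA : ∑ c, (x c ⬝ᵥ (G.lapMatrix ℝ) *ᵥ (x c)) = 2 * (cutSize G f : ℝ) := by
    simp_rw [Qform]
    rw [← Finset.sum_div, Finset.sum_comm]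
    rw [show ∑ i, ∑ c, ∑ j, (if G.Adj i j then (x c i - x c j)^2 else 0)
        = ∑ i, ∑ j, ∑ c, (if G.Adj i j then (x c i - x c j)^2 else 0) from
      Finset.sum_congr rfl fun i _ => Finset.sum_comm]
    simp_rw [hpair]
    rw [← Finset.sum_product' (f := fun i j => if G.Adj i j ∧ f i ≠ f j then (2:ℝ) else 0),
      ← Finset.sum_filter, Finset.sum_const, nsmul_eq_mul]
    rw [Finset.univ_product_univ]
    have := pairs_card G f
    rw [show ((univ : Finset (Fin n × Fin n)).filter
        fun p => G.Adj p.1 p.2 ∧ f p.1 ≠ f p.2).card = 2 * cutSize G f from this]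
    push_cast
    ring
  -- Step B: replacing x by y does not change the quadratic form
  have hB : ∀ c, (y c ⬝ᵥ (G.lapMatrix ℝ) *ᵥ (y c)) = (x c ⬝ᵥ (G.lapMatrix ℝ) *ᵥ (x c)) := by
    intro c
    rw [Qform, Qform]
    have hdiff : ∀ i j : Fin n, y c i - y c j = x c i - x c j := by
      intro i j; simp only [hy]; ring
    simp_rw [hdiff]
  -- Step C: norms of y c
  have hsum1 : ∀ c, ∑ i, x c i = (N c : ℝ) := by
    intro c
    simp [hx, hN, Finset.sum_boole]
  have hsq : ∀ c i, x c i * x c i = x c i := by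
    intro c i
    by_cases h : f i = c <;> simp [hx, h]
  have hC : ∀ c, y c ⬝ᵥ y c = (N c : ℝ) - (N c : ℝ)^2 / n := by
    intro c
    have : y c ⬝ᵥ y c = ∑ i, (x c i * x c i - 2 * m c * x c i + m c ^ 2) := by
      apply Finset.sum_congr rfl
      intro i _
      simp only [hy]; ring
    rw [this]
    simp_rw [hsq]
    rw [Finset.sum_add_distrib, Finset.sum_sub_distrib, hsum1, ← Finset.mul_sum, hsum1,
      Finset.sum_const, Finset.card_univ, Fintype.card_fin, nsmul_eq_mul]
    rw [hm]
    field_simp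
    ring
  -- Step D : sum of fiber sizes is n
  have hD : ∑ c, (N c : ℝ) = (n : ℝ) := by
    have := Finset.card_eq_sum_card_fiberwise (s := (univ : Finset (Fin n)))
      (t := (univ : Finset (Fin k))) (f := f) (fun x _ => mem_univ _)
    rw [Finset.card_univ, Fintype.card_fin] at this
    exact_mod_cast congrArg (Nat.cast : ℕ → ℝ) this.symm
  -- Step E : Cauchy-Schwarz
  have hE : (n : ℝ)^2 ≤ (k : ℝ) * ∑ c, (N c : ℝ)^2 := by
    have := sq_sum_le_card_mul_sum_sq (s := (univ : Finset (Fin k)))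
      (f := fun c => (N c : ℝ))
    rw [hD, Finset.card_univ, Fintype.card_fin] at this
    exact_mod_cast this
  -- Step F : total norm bound
  have hF : ∑ c, y c ⬝ᵥ y c ≤ (n : ℝ) * ((k : ℝ) - 1) / k := by
    simp_rw [hC]
    rw [Finset.sum_sub_distrib, hD, ← Finset.sum_div]
    have h2 : (n:ℝ)/(k:ℝ) ≤ (∑ c, (N c : ℝ)^2) / n := by
      rw [div_le_div_iff₀ hkR hnR]
      nlinarith [hE]
    have h3 : (n : ℝ) * ((k : ℝ) - 1) / k = (n:ℝ) - (n:ℝ)/(k:ℝ) := by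
      field_simp
    rw [h3]
    linarith
  -- Assemble
  have hHerm : (G.lapMatrix ℝ).IsHermitian := (SimpleGraph.posSemidef_lapMatrix ℝ G).1
  have hmain : 2 * (cutSize G f : ℝ) ≤ lam * ((n : ℝ) * ((k : ℝ) - 1) / k) := by
    calc 2 * (cutSize G f : ℝ) = ∑ c, (x c ⬝ᵥ (G.lapMatrix ℝ) *ᵥ (x c)) := hA.symm
      _ = ∑ c, (y c ⬝ᵥ (G.lapMatrix ℝ) *ᵥ (y c)) := (Finset.sum_congr rfl fun c _ => hB c).symm
      _ ≤ ∑ c, lam * (y c ⬝ᵥ y c) :=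
          Finset.sum_le_sum fun c _ => quad_le_aux _ hHerm lam hlam.2 (y c)
      _ = lam * ∑ c, y c ⬝ᵥ y c := by rw [Finset.mul_sum]
      _ ≤ lam * ((n : ℝ) * ((k : ℝ) - 1) / k) := mul_le_mul_of_nonneg_left hF hlam0
  have heq : (n : ℝ) * ((k : ℝ) - 1) / (2 * k) * lam = lam * ((n : ℝ) * ((k : ℝ) - 1) / k) / 2 := by
    field_simp
  linarith
end

section
/- For any simple graph G = (V,E) with Laplacian matrix L and n = |V| vertices, the chromatic number satisfies χ(G) ≥ 1 + 2|E| / (n·λ_max(L) − 2|E|), provided n·λ_max(L) > 2|E|. -/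
open Matrix

lemma rayleigh_le {n : ℕ} (M : Matrix (Fin n) (Fin n) ℝ) (hM : M.IsHermitian)
    (lam : ℝ) (hlam : isLargestEigenvalue M lam) (x : Fin n → ℝ) :
    x ⬝ᵥ M *ᵥ x ≤ lam * (x ⬝ᵥ x) := by
  classical
  have hev : ∀ i, hM.eigenvalues i ≤ lam := fun i =>
    hlam.2 _ ⟨_, (by intro h0; apply hM.eigenvectorBasis.orthonormal.ne_zero i; exact WithLp.ofLp_injective 2 (by simp [h0])), hM.mulVec_eigenvectorBasis i⟩
  set U : Matrix (Fin n) (Fin n) ℝ := (hM.eigenvectorUnitary : Matrix (Fin n) (Fin n) ℝ) with hU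
  have hUU : U * star U = 1 := (Matrix.mem_unitaryGroup_iff).mp hM.eigenvectorUnitary.2
  set y : Fin n → ℝ := (star U) *ᵥ x with hy
  have hdot : ∀ w : Fin n → ℝ, x ⬝ᵥ (U *ᵥ w) = y ⬝ᵥ w := by
    intro w
    rw [hy, Matrix.dotProduct_mulVec, star_eq_conjTranspose,
      Matrix.conjTranspose_eq_transpose_of_trivial, ← Matrix.mulVec_transpose]
  have hxx : x ⬝ᵥ x = y ⬝ᵥ y := by
    have := hdot ((star U) *ᵥ x)
    rw [Matrix.mulVec_mulVec, hUU, Matrix.one_mulVec] at this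
    rw [this, hy]
  have hqf : x ⬝ᵥ M *ᵥ x = ∑ i, hM.eigenvalues i * (y i * y i) := by
    conv_lhs => rw [hM.spectral_theorem, Unitary.conjStarAlgAut_apply]
    rw [← Matrix.mulVec_mulVec, ← Matrix.mulVec_mulVec, hdot]
    simp [Matrix.mulVec_diagonal, dotProduct]
    apply Finset.sum_congr rfl
    intro i _
    ring
  rw [hqf, hxx, dotProduct, Finset.mul_sum]
  apply Finset.sum_le_sum
  intro i _
  have := mul_le_mul_of_nonneg_right (hev i) (mul_self_nonneg (y i))
  simpa using this

theorem stmt_1 {n : ℕ} (G : SimpleGraph (Fin n)) [DecidableRel G.Adj]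
    (lam : ℝ) (hlam : isLargestEigenvalue (G.lapMatrix ℝ) lam)
    (h : 2 * (G.edgeFinset.card : ℝ) < (n : ℝ) * lam) :
    ∀ c : ℕ, G.Colorable c →
      1 + 2 * (G.edgeFinset.card : ℝ) / ((n : ℝ) * lam - 2 * G.edgeFinset.card) ≤ (c : ℝ) := by
  classical
  intro c hcol
  set m : ℝ := (G.edgeFinset.card : ℝ) with hm
  have hm0 : (0:ℝ) ≤ m := by positivity
  have hnpos : 0 < n := by
    by_contra hn
    push_neg at hn
    have h0 : (n:ℝ) = 0 := by simp [Nat.le_zero.mp hn]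
    rw [h0, zero_mul] at h
    linarith
  obtain ⟨C⟩ := hcol
  have hc1 : 1 ≤ c := by
    rcases Nat.eq_zero_or_pos c with hc | hc
    · subst hc; exact (C ⟨0, hnpos⟩).elim0
    · exact hc
  have hcR : (1:ℝ) ≤ (c:ℝ) := by exact_mod_cast hc1
  have hcne : (c:ℝ) ≠ 0 := by positivity
  set z : Fin c → Fin n → ℝ := fun i v => (if C v = i then 1 else 0) - 1/(c:ℝ) with hz
  have hQF : ∀ x : Fin n → ℝ, x ⬝ᵥ (G.lapMatrix ℝ) *ᵥ x =
      (∑ u, ∑ v, if G.Adj u v then (x u - x v)^2 else 0)/2 := by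
    intro x
    rw [← Matrix.toLinearMap₂'_apply', SimpleGraph.lapMatrix_toLinearMap₂']
  -- quadratic form sum
  have step : ∀ u v : Fin n, C u ≠ C v → ∑ i : Fin c, (z i u - z i v)^2 = 2 := by
    intro u v hne
    have hpt : ∀ i, (z i u - z i v)^2 = (if C u = i then (1:ℝ) else 0) +
        ((if C v = i then (1:ℝ) else 0) -
          2*((if C u = i then (1:ℝ) else 0)*(if C v = i then (1:ℝ) else 0))) := by
      intro i
      simp only [hz]
      split_ifs <;> ring
    simp_rw [hpt]
    rw [Finset.sum_add_distrib, Finset.sum_sub_distrib]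
    have e1 : ∑ i : Fin c, (if C u = i then (1:ℝ) else 0) = 1 := by
      simp [Finset.sum_ite_eq]
    have e2 : ∑ i : Fin c, (if C v = i then (1:ℝ) else 0) = 1 := by
      simp [Finset.sum_ite_eq]
    have e3 : ∑ i : Fin c,
        2*((if C u = i then (1:ℝ) else 0)*(if C v = i then (1:ℝ) else 0)) = 0 := by
      apply Finset.sum_eq_zero
      intro i _
      by_cases h1 : C u = i <;> by_cases h2 : C v = i <;> simp_all
    rw [e1, e2, e3]
    norm_num
  have key1 : ∑ i, (z i) ⬝ᵥ (G.lapMatrix ℝ) *ᵥ (z i) = 2 * m := by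
    simp_rw [hQF]
    rw [← Finset.sum_div]
    rw [Finset.sum_comm]
    have inner : ∀ u : Fin n, ∑ i : Fin c, ∑ v : Fin n,
        (if G.Adj u v then (z i u - z i v)^2 else 0)
        = ∑ v : Fin n, (if G.Adj u v then (2:ℝ) else 0) := by
      intro u
      rw [Finset.sum_comm]
      apply Finset.sum_congr rfl
      intro v _
      by_cases hadj : G.Adj u v
      · simp only [hadj, if_true]
        exact step u v (C.valid hadj)
      · simp [hadj]
    simp_rw [inner]
    have deg : ∀ u : Fin n, ∑ v : Fin n, (if G.Adj u v then (2:ℝ) else 0)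
        = 2 * (G.degree u : ℝ) := by
      intro u
      rw [G.degree_eq_sum_if_adj u, Finset.mul_sum]
      apply Finset.sum_congr rfl
      intro v _
      by_cases hadj : G.Adj u v <;> simp [hadj]
    simp_rw [deg]
    rw [← Finset.mul_sum]
    have : ∑ u : Fin n, (G.degree u : ℝ) = 2 * m := by
      rw [hm, ← Nat.cast_sum, G.sum_degrees_eq_twice_card_edges]
      push_cast
      ring
    rw [this]
    ring
  have key2 : ∑ i, (z i) ⬝ᵥ (z i) = (n:ℝ) * (1 - 1/(c:ℝ)) := by
    simp_rw [dotProduct]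
    rw [Finset.sum_comm]
    have inner : ∀ v : Fin n, ∑ i : Fin c, z i v * z i v = 1 - 1/(c:ℝ) := by
      intro v
      have hpt : ∀ i, z i v * z i v = (if C v = i then (1:ℝ) else 0)
          + (1/(c:ℝ)^2 - 2/(c:ℝ) * (if C v = i then (1:ℝ) else 0)) := by
        intro i
        by_cases h1 : C v = i <;> simp [hz, h1] <;> ring
      simp_rw [hpt]
      rw [Finset.sum_add_distrib, Finset.sum_sub_distrib, ← Finset.mul_sum]
      have e1 : ∑ i : Fin c, (if C v = i then (1:ℝ) else 0) = 1 := by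
        simp [Finset.sum_ite_eq]
      rw [e1, Finset.sum_const]
      simp only [Finset.card_univ, Fintype.card_fin, nsmul_eq_mul]
      field_simp
      ring
    simp_rw [inner]
    rw [Finset.sum_const]
    simp [Finset.card_univ]
  have hHerm : (G.lapMatrix ℝ).IsHermitian := (G.posSemidef_lapMatrix ℝ).1
  have hineq : 2 * m ≤ lam * ((n:ℝ) * (1 - 1/(c:ℝ))) := by
    rw [← key1, ← key2, Finset.mul_sum]
    exact Finset.sum_le_sum fun i _ => rayleigh_le _ hHerm lam hlam (z i)
  have hcpos : (0:ℝ) < (c:ℝ) := by positivity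
  have claim : 2 * m * (c:ℝ) ≤ ((c:ℝ) - 1) * ((n:ℝ) * lam) := by
    have h2 := mul_le_mul_of_nonneg_right hineq hcpos.le
    have hc' : (1/(c:ℝ)) * (c:ℝ) = 1 := by field_simp
    nlinarith [h2, hc']
  have hd : (0:ℝ) < (n:ℝ) * lam - 2 * m := by linarith
  have hdiv : 2 * m / ((n:ℝ) * lam - 2 * m) ≤ (c:ℝ) - 1 := by
    rw [div_le_iff₀ hd]
    nlinarith [claim]
  linarith
end

section
/- The maximum of Σ_{i<j} m_i m_j over nonnegative integers m_1,...,m_k with Σ m_i = n is attained by taking e parts of size ⌈n/k⌉ and k−e parts of size ⌊n/k⌋, where e = n − k⌊n/k⌋. -/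
def pairSum {k : ℕ} (m : Fin k → ℕ) : ℕ :=
  ∑ p ∈ (Finset.univ : Finset (Fin k × Fin k)).filter (fun p => p.1 < p.2), m p.1 * m p.2

open Finset in
lemma key_identity {k : ℕ} (m : Fin k → ℕ) :
    2 * pairSum m + ∑ i, m i ^ 2 = (∑ i, m i) ^ 2 := by
  have hgrid : (∑ i, m i) ^ 2 = ∑ p ∈ (univ : Finset (Fin k × Fin k)), m p.1 * m p.2 := by
    rw [sq, Finset.sum_mul_sum, ← Finset.univ_product_univ, Finset.sum_product]
  set S : Finset (Fin k × Fin k) := univ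
  have hsplit1 : ∑ p ∈ S, m p.1 * m p.2 =
      ∑ p ∈ S.filter (fun p => p.1 < p.2), m p.1 * m p.2 +
      ∑ p ∈ S.filter (fun p => ¬ p.1 < p.2), m p.1 * m p.2 :=
    (Finset.sum_filter_add_sum_filter_not _ _ _).symm
  have hsplit2 : ∑ p ∈ S.filter (fun p => ¬ p.1 < p.2), m p.1 * m p.2 =
      ∑ p ∈ (S.filter (fun p => ¬ p.1 < p.2)).filter (fun p => p.1 = p.2), m p.1 * m p.2 +
      ∑ p ∈ (S.filter (fun p => ¬ p.1 < p.2)).filter (fun p => ¬ p.1 = p.2), m p.1 * m p.2 :=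
    (Finset.sum_filter_add_sum_filter_not _ _ _).symm
  have hdiag : (S.filter (fun p => ¬ p.1 < p.2)).filter (fun p => p.1 = p.2)
      = S.filter (fun p => p.1 = p.2) := by
    rw [Finset.filter_filter]
    apply Finset.filter_congr
    intro p _
    constructor
    · rintro ⟨_, h⟩; exact h
    · intro h; exact ⟨by simp [h], h⟩
  have hgt : (S.filter (fun p => ¬ p.1 < p.2)).filter (fun p => ¬ p.1 = p.2)
      = S.filter (fun p => p.2 < p.1) := by
    rw [Finset.filter_filter]
    apply Finset.filter_congr
    intro p _
    simp only [not_lt]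
    constructor
    · rintro ⟨h1, h2⟩; exact lt_of_le_of_ne h1 (Ne.symm h2)
    · intro h; exact ⟨le_of_lt h, ne_of_gt h⟩
  have hgtlt : ∑ p ∈ S.filter (fun p => p.2 < p.1), m p.1 * m p.2 =
      ∑ p ∈ S.filter (fun p => p.1 < p.2), m p.1 * m p.2 := by
    apply Finset.sum_nbij' (fun p => (p.2, p.1)) (fun p => (p.2, p.1)) <;>
      simp [S, mul_comm]
  have hdsum : ∑ p ∈ S.filter (fun p => p.1 = p.2), m p.1 * m p.2 = ∑ i, m i ^ 2 := by
    apply Finset.sum_nbij' (fun p => p.1) (fun i => (i, i)) <;>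
      first
      | (rintro ⟨a, b⟩ h; simp [S] at h ⊢; simp [h, sq])
      | simp [S, sq]
  rw [hgrid, hsplit1, hsplit2, hdiag, hgt, hgtlt, hdsum, pairSum]
  ring

theorem stmt_7 {n k : ℕ} (hk : 1 ≤ k) (hkn : k ≤ n)
    (m : Fin k → ℕ) (hm : ∀ i : Fin k, m i = if (i : ℕ) < n % k then n / k + 1 else n / k) :
    (∑ i, m i = n) ∧ ∀ m' : Fin k → ℕ, (∑ i, m' i = n) → pairSum m' ≤ pairSum m := by
  set q := n / k with hq
  set e := n % k with he'
  have he : e < k := Nat.mod_lt _ hk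
  have hn : k * q + e = n := by exact Nat.div_add_mod n k
  have hcard : (Finset.univ.filter fun i : Fin k => (i:ℕ) < e).card = e := by
    have heq : (Finset.univ.filter fun i : Fin k => (i:ℕ) < e) =
        (Finset.range e).attachFin (fun x hx => lt_of_lt_of_le (Finset.mem_range.mp hx) he.le) := by
      ext i
      simp [Finset.mem_attachFin]
    rw [heq, Finset.card_attachFin, Finset.card_range]
  have hcard' : (Finset.univ.filter fun i : Fin k => ¬ (i:ℕ) < e).card = k - e := by
    have := Finset.card_filter_add_card_filter_not
      (s := (Finset.univ : Finset (Fin k))) (p := fun i : Fin k => (i:ℕ) < e)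
    simp only [Finset.card_univ, Fintype.card_fin] at this
    omega
  have hsum : ∑ i, m i = n := by
    calc ∑ i, m i = ∑ i : Fin k, (if (i:ℕ) < e then q + 1 else q) :=
          Finset.sum_congr rfl (fun i _ => hm i)
      _ = e * (q + 1) + (k - e) * q := by
          rw [Finset.sum_ite, Finset.sum_const, Finset.sum_const, hcard, hcard', smul_eq_mul,
            smul_eq_mul]
      _ = n := by zify [he.le]; rw [← hn]; push_cast; ring
  have hsq : ∑ i, m i ^ 2 + k * (q ^ 2 + q) = 2 * q * n + n := by
    have h1 : ∑ i, m i ^ 2 = e * (q + 1) ^ 2 + (k - e) * q ^ 2 := by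
      calc ∑ i, m i ^ 2 = ∑ i : Fin k, (if (i:ℕ) < e then (q+1)^2 else q^2) :=
            Finset.sum_congr rfl (fun i _ => by rw [hm i]; split <;> rfl)
        _ = e * (q + 1) ^ 2 + (k - e) * q ^ 2 := by
            rw [Finset.sum_ite, Finset.sum_const, Finset.sum_const, hcard, hcard', smul_eq_mul,
              smul_eq_mul]
    rw [h1]; zify [he.le]; rw [← hn]; push_cast; ring
  refine ⟨hsum, fun m' hsum' => ?_⟩
  have hsq' : 2 * q * n + n ≤ ∑ i, m' i ^ 2 + k * (q ^ 2 + q) := by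
    have hterm : ∀ x : ℕ, 2 * q * x + x ≤ x ^ 2 + (q ^ 2 + q) := by
      intro x
      have h0 : (0:ℤ) ≤ ((x:ℤ) - q) * ((x:ℤ) - q - 1) := by
        rcases le_or_gt x q with h | h
        · have hx : (x:ℤ) ≤ q := by exact_mod_cast h
          nlinarith
        · have hx : (q:ℤ) + 1 ≤ x := by exact_mod_cast h
          nlinarith
      zify
      nlinarith [h0]
    calc 2 * q * n + n = ∑ i, (2 * q * m' i + m' i) := by
          rw [Finset.sum_add_distrib, ← Finset.mul_sum, hsum']
      _ ≤ ∑ i : Fin k, (m' i ^ 2 + (q ^ 2 + q)) := Finset.sum_le_sum (fun i _ => hterm (m' i))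
      _ = ∑ i, m' i ^ 2 + k * (q ^ 2 + q) := by
          rw [Finset.sum_add_distrib, Finset.sum_const, Finset.card_univ, Fintype.card_fin,
            smul_eq_mul]
  have hkm := key_identity m
  have hkm' := key_identity m'
  rw [hsum] at hkm
  rw [hsum'] at hkm'
  omega
end

section
/- The maximum q-cut of H(d,q,d) equals the number of its edges, (1/2)·(q−1)^d·q^d, and this equals the eigenvalue bound (q^d(q−1)/(2q))·λ_max(L) = (q^d(q−1)/(2q))·q(q−1)^{d−1}. Consequently the chromatic number of H(d,q,d) equals q. -/
def hammingGraph (d q j : ℕ) : SimpleGraph (Fin d → Fin q) where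
  Adj x y := x ≠ y ∧ hammingDist x y = j
  symm := ⟨fun x y h => ⟨h.1.symm, by rw [hammingDist_comm]; exact h.2⟩⟩
  loopless := ⟨fun x h => h.1 rfl⟩

instance (d q j : ℕ) : DecidableRel (hammingGraph d q j).Adj :=
  fun x y => inferInstanceAs (Decidable (x ≠ y ∧ hammingDist x y = j))

def cutSizeH {d q k : ℕ} (G : SimpleGraph (Fin d → Fin q)) [DecidableRel G.Adj]
    (f : (Fin d → Fin q) → Fin k) : ℕ :=
  (G.edgeFinset.filter (fun e => ¬ (Sym2.map f e).IsDiag)).card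

lemma hg_adj_iff {d q : ℕ} (hd : 1 ≤ d) (x y : Fin d → Fin q) :
    (hammingGraph d q d).Adj x y ↔ ∀ i, x i ≠ y i := by
  constructor
  · rintro ⟨-, h2⟩ i
    have : ({i | x i ≠ y i} : Finset (Fin d)) = Finset.univ := by
      apply Finset.eq_univ_of_card
      simpa [Fintype.card_fin, hammingDist] using h2
    have := Finset.eq_univ_iff_forall.mp this i
    simpa using this
  · intro h
    have hu : ({i | x i ≠ y i} : Finset (Fin d)) = Finset.univ :=
      Finset.eq_univ_iff_forall.mpr (by simpa using h)
    refine ⟨fun he => h ⟨0, hd⟩ (by rw [he]), ?_⟩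
    simp [hammingDist, hu]

lemma hg_deg {d q : ℕ} (hd : 1 ≤ d) (x : Fin d → Fin q) :
    (hammingGraph d q d).degree x = (q - 1) ^ d := by
  have : (hammingGraph d q d).neighborFinset x
      = Fintype.piFinset (fun i => ({x i}ᶜ : Finset (Fin q))) := by
    ext y
    simp only [SimpleGraph.mem_neighborFinset, Fintype.mem_piFinset, Finset.mem_compl,
      Finset.mem_singleton]
    rw [hg_adj_iff hd]
    exact ⟨fun h i => Ne.symm (h i), fun h i => Ne.symm (h i)⟩
  rw [SimpleGraph.degree, this, Fintype.card_piFinset]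
  simp [Finset.card_compl]

theorem stmt_16 {d q : ℕ} (hd : 1 ≤ d) (hq : 2 ≤ q) :
    (∀ f : (Fin d → Fin q) → Fin q,
      cutSizeH (hammingGraph d q d) f ≤ (hammingGraph d q d).edgeFinset.card) ∧
    (∃ f : (Fin d → Fin q) → Fin q,
      cutSizeH (hammingGraph d q d) f = (hammingGraph d q d).edgeFinset.card) ∧
    2 * (hammingGraph d q d).edgeFinset.card = (q - 1) ^ d * q ^ d ∧
    ((q : ℝ) ^ d * ((q : ℝ) - 1) / (2 * q)) * ((q : ℝ) * ((q : ℝ) - 1) ^ (d - 1))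
      = ((q : ℝ) - 1) ^ d * (q : ℝ) ^ d / 2 ∧
    (hammingGraph d q d).chromaticNumber = (q : ℕ∞) := by
  have i0 : Fin d := ⟨0, hd⟩
  refine ⟨fun f => Finset.card_filter_le _ _, ?_, ?_, ?_, ?_⟩
  · refine ⟨fun x => x i0, ?_⟩
    unfold cutSizeH
    rw [Finset.filter_true_of_mem]
    intro e he
    induction e with
    | _ x y =>
      rw [SimpleGraph.mem_edgeFinset, SimpleGraph.mem_edgeSet] at he
      have := (hg_adj_iff hd x y).mp he i0
      simpa using this
  · have := SimpleGraph.sum_degrees_eq_twice_card_edges (hammingGraph d q d)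
    rw [← this]
    have : ∀ x ∈ (Finset.univ : Finset (Fin d → Fin q)),
        (hammingGraph d q d).degree x = (q - 1) ^ d := fun x _ => hg_deg hd x
    rw [Finset.sum_congr rfl this, Finset.sum_const, Finset.card_univ, smul_eq_mul]
    simp [Fintype.card_fin, mul_comm]
  · obtain ⟨d', rfl⟩ : ∃ d', d = d' + 1 := ⟨d - 1, (Nat.succ_pred_eq_of_pos hd).symm⟩
    simp only [Nat.add_sub_cancel]
    have hq0 : (q : ℝ) ≠ 0 := by positivity
    field_simp
    ring
  · have col : (hammingGraph d q d).Colorable q := by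
      have C : (hammingGraph d q d).Coloring (Fin q) :=
        SimpleGraph.Coloring.mk (fun x => x i0)
          (fun {x y} h => (hg_adj_iff hd x y).mp h i0)
      simpa using C.colorable
    have emb : (⊤ : SimpleGraph (Fin q)) ↪g hammingGraph d q d := by
      refine ⟨⟨fun a _ => a, fun a b h => congrFun h i0⟩, ?_⟩
      intro a b
      simp only [Function.Embedding.coeFn_mk, SimpleGraph.top_adj]
      rw [hg_adj_iff hd]
      exact ⟨fun h => h i0, fun h i => h⟩
    have lb := SimpleGraph.chromaticNumber_mono_of_hom emb.toHom
    rw [SimpleGraph.chromaticNumber_top, Fintype.card_fin] at lb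
    exact le_antisymm col.chromaticNumber_le lb
end

section
/- Every feasible solution Y of the SDP relaxation (diag(Y) = 1, kY − J ⪰ 0, Y ≥ 0 entrywise) gives an objective value (1/2)tr(LY) at most (n(k−1)/(2k))·λ_max(L); i.e., the SDP bound is dominated by the eigenvalue bound. -/
open scoped MatrixOrder in
open Matrix in
lemma trace_mul_nonneg_of_posSemidef {n : ℕ} {A B : Matrix (Fin n) (Fin n) ℝ}
    (hA : A.PosSemidef) (hB : B.PosSemidef) : 0 ≤ (A * B).trace := by
  have key : A * B = CFC.sqrt A * (CFC.sqrt A * (CFC.sqrt B * CFC.sqrt B)) := by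
    rw [← Matrix.mul_assoc, CFC.sqrt_mul_sqrt_self A hA.nonneg, CFC.sqrt_mul_sqrt_self B hB.nonneg]
  have hC : (CFC.sqrt B * CFC.sqrt A)ᴴ * (CFC.sqrt B * CFC.sqrt A)
      = CFC.sqrt A * (CFC.sqrt B * CFC.sqrt B) * CFC.sqrt A := by
    rw [Matrix.conjTranspose_mul, (CFC.sqrt_nonneg A).posSemidef.isHermitian.eq,
      (CFC.sqrt_nonneg B).posSemidef.isHermitian.eq]
    noncomm_ring
  rw [key, Matrix.trace_mul_comm, ← hC]
  have : ((CFC.sqrt B * CFC.sqrt A)ᴴ * (CFC.sqrt B * CFC.sqrt A)).trace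
      = ∑ i, ∑ j, ((CFC.sqrt B * CFC.sqrt A) j i) ^ 2 := by
    simp [Matrix.trace, Matrix.diag, Matrix.mul_apply, Matrix.conjTranspose_apply, sq, mul_comm]
  rw [this]
  positivity

open Matrix in
lemma smul_one_sub_posSemidef {n : ℕ} {L : Matrix (Fin n) (Fin n) ℝ} (hL : L.IsHermitian)
    {lam : ℝ} (hlam : ∀ μ : ℝ, (∃ v : Fin n → ℝ, v ≠ 0 ∧ L.mulVec v = μ • v) → μ ≤ lam) :
    (lam • (1 : Matrix (Fin n) (Fin n) ℝ) - L).PosSemidef := by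
  have hAh : (lam • (1 : Matrix (Fin n) (Fin n) ℝ) - L).IsHermitian := by
    apply Matrix.IsHermitian.sub _ hL
    unfold Matrix.IsHermitian
    simp
  have heig : ∀ i, 0 ≤ hAh.eigenvalues i := by
    intro i
    set v : Fin n → ℝ := ⇑(hAh.eigenvectorBasis i) with hv
    have hv0 : v ≠ 0 := by
      intro h
      exact hAh.eigenvectorBasis.orthonormal.ne_zero i (by ext j; exact congrFun h j)
    have hmv := hAh.mulVec_eigenvectorBasis i
    have hLv : L.mulVec v = (lam - hAh.eigenvalues i) • v := by
      have : (lam • (1 : Matrix (Fin n) (Fin n) ℝ) - L).mulVec v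
          = lam • v - L.mulVec v := by
        rw [Matrix.sub_mulVec, Matrix.smul_mulVec, Matrix.one_mulVec]
      rw [this] at hmv
      have := sub_eq_iff_eq_add.mp hmv
      rw [sub_smul]
      linear_combination (norm := module) -this
    have := hlam _ ⟨v, hv0, hLv⟩
    linarith
  rw [hAh.spectral_theorem, Unitary.conjStarAlgAut_apply]
  exact (Matrix.posSemidef_diagonal_iff.mpr (by simpa using heig)).mul_mul_conjTranspose_same _

theorem stmt_18 {n k : ℕ} (hk : 2 ≤ k) (G : SimpleGraph (Fin n)) [DecidableRel G.Adj]
    (lam : ℝ) (hlam : isLargestEigenvalue (G.lapMatrix ℝ) lam)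
    (Y : Matrix (Fin n) (Fin n) ℝ) (hYsymm : Y.IsSymm)
    (hdiag : ∀ i, Y i i = 1)
    (hpsd : ((k : ℝ) • Y - Matrix.of (fun _ _ => (1 : ℝ))).PosSemidef)
    (hnonneg : ∀ i j, 0 ≤ Y i j) :
    (1 / 2) * ((G.lapMatrix ℝ) * Y).trace ≤ (n : ℝ) * ((k : ℝ) - 1) / (2 * k) * lam := by
  have hk0 : (0 : ℝ) < k := by positivity
  set L := G.lapMatrix ℝ with hLdef
  set J : Matrix (Fin n) (Fin n) ℝ := Matrix.of (fun _ _ => (1 : ℝ)) with hJ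
  set M : Matrix (Fin n) (Fin n) ℝ := (k : ℝ) • Y - J with hM
  have hLpsd : L.PosSemidef := G.posSemidef_lapMatrix ℝ
  have hApsd : (lam • (1 : Matrix (Fin n) (Fin n) ℝ) - L).PosSemidef :=
    smul_one_sub_posSemidef hLpsd.isHermitian (fun μ hμ => hlam.2 μ hμ)
  have key : 0 ≤ ((lam • (1 : Matrix (Fin n) (Fin n) ℝ) - L) * M).trace :=
    trace_mul_nonneg_of_posSemidef hApsd hpsd
  have hMtr : M.trace = (n : ℝ) * ((k : ℝ) - 1) := by
    simp [hM, Matrix.trace, Matrix.diag, hdiag, hJ, Finset.sum_sub_distrib, mul_comm, mul_sub, Matrix.of_apply]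
  have hexp : ((lam • (1 : Matrix (Fin n) (Fin n) ℝ) - L) * M).trace
      = lam * M.trace - (L * M).trace := by
    rw [Matrix.sub_mul, Matrix.smul_mul, Matrix.one_mul, Matrix.trace_sub, Matrix.trace_smul]
    simp
  have hLJ : (L * J).trace = 0 := by
    have hrow := G.lapMatrix_mulVec_const_eq_zero (R := ℝ)
    have : ∀ i, (L * J) i i = 0 := by
      intro i
      have := congrFun hrow i
      simpa [Matrix.mulVec, dotProduct, Matrix.mul_apply, hJ] using this
    simp [Matrix.trace, Matrix.diag, this]
  have hLM : (L * M).trace = (k : ℝ) * (L * Y).trace := by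
    rw [hM, Matrix.mul_sub, Matrix.mul_smul, Matrix.trace_sub, Matrix.trace_smul, hLJ]
    simp
  rw [hexp, hMtr, hLM] at key
  have hrhs : (n : ℝ) * ((k : ℝ) - 1) / (2 * k) * lam = lam * ((n : ℝ) * ((k : ℝ) - 1)) / (2 * k) := by
    ring
  rw [hrhs, le_div_iff₀ (by positivity)]
  nlinarith [key]
end
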